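/- The asynchronous iterations of the negation function are Devaney-chaotic: G_¬ is topologically transitive, its periodic points are dense in X, and it has sensitive dependence on initial conditions (which, on this infinite metric space, also follows from transitivity plus dense periodic points). -/

import Mathlib

noncomputable def de (n : ℕ) (E F : Fin n → Bool) : ℝ :=
  ∑ k : Fin n, if E k = F k then 0 else 1

noncomputable def ds (n : ℕ) (S T : ℕ → Fin n) : ℝ :=
  (9 / (n : ℝ)) * ∑' k : ℕ, |((S k : ℕ) : ℝ) - ((T k : ℕ) : ℝ)| / 10 ^ (k + 1)

noncomputable def dX (n : ℕ) (X Y : (ℕ → Fin n) × (Fin n → Bool)) : ℝ :=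
  de n X.2 Y.2 + ds n X.1 Y.1

def Ff (n : ℕ) (f : (Fin n → Bool) → Fin n → Bool) (i : Fin n) (x : Fin n → Bool) :
    Fin n → Bool :=
  Function.update x i (f x i)

def Gf (n : ℕ) (f : (Fin n → Bool) → Fin n → Bool)
    (X : (ℕ → Fin n) × (Fin n → Bool)) : (ℕ → Fin n) × (Fin n → Bool) :=
  (fun t => X.1 (t + 1), Ff n f (X.1 0) X.2)

def Gneg (n : ℕ) : (ℕ → Fin n) × (Fin n → Bool) → (ℕ → Fin n) × (Fin n → Bool) :=
  Gf n (fun x i => !(x i))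

/-! ### Auxiliary machinery -/

def flipB {n : ℕ} (j : Fin n) (E : Fin n → Bool) : Fin n → Bool :=
  Function.update E j (!(E j))

def applyL {n : ℕ} (l : List (Fin n)) (E : Fin n → Bool) : Fin n → Bool :=
  l.foldl (fun F a => flipB a F) E

def seqApp {n : ℕ} (l : List (Fin n)) (T : ℕ → Fin n) : ℕ → Fin n :=
  fun k => if h : k < l.length then l.get ⟨k, h⟩ else T (k - l.length)

lemma Gneg_apply {n : ℕ} (S : ℕ → Fin n) (E : Fin n → Bool) :
    Gneg n (S, E) = (fun k => S (k + 1), flipB (S 0) E) := rfl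

lemma applyL_cons {n : ℕ} (a : Fin n) (l : List (Fin n)) (E : Fin n → Bool) :
    applyL (a :: l) E = applyL l (flipB a E) := rfl

lemma applyL_append {n : ℕ} (l₁ l₂ : List (Fin n)) (E : Fin n → Bool) :
    applyL (l₁ ++ l₂) E = applyL l₂ (applyL l₁ E) := List.foldl_append

lemma iter_seqApp {n : ℕ} :
    ∀ (l : List (Fin n)) (T : ℕ → Fin n) (E : Fin n → Bool),
      (Gneg n)^[l.length] (seqApp l T, E) = (T, applyL l E) := by
  intro l
  induction l with
  | nil =>
    intro T E
    have h : seqApp ([] : List (Fin n)) T = T := by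
      funext k; simp [seqApp]
    simp [h, applyL]
  | cons a tl ih =>
    intro T E
    have hG : Gneg n (seqApp (a :: tl) T, E) = (seqApp tl T, flipB a E) := by
      rw [Gneg_apply]
      have h0 : seqApp (a :: tl) T 0 = a := by simp [seqApp]
      have hsh : (fun k => seqApp (a :: tl) T (k + 1)) = seqApp tl T := by
        funext k
        simp only [seqApp, List.length_cons]
        by_cases h : k < tl.length
        · rw [dif_pos (by omega : k + 1 < tl.length + 1), dif_pos h]
          rfl
        · rw [dif_neg (by omega), dif_neg h]
          congr 1
          omega
      rw [h0, hsh]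
    have hlen : (a :: tl).length = tl.length + 1 := rfl
    rw [hlen, Function.iterate_succ_apply, hG, ih, applyL_cons]

lemma applyL_nodup {n : ℕ} :
    ∀ (l : List (Fin n)), l.Nodup → ∀ E : Fin n → Bool,
      applyL l E = fun j => if j ∈ l then !(E j) else E j := by
  intro l
  induction l with
  | nil => intro _ E; funext j; simp [applyL]
  | cons a tl ih =>
    intro hnd E
    rw [List.nodup_cons] at hnd
    rw [applyL_cons, ih hnd.2 (flipB a E)]
    funext j
    by_cases hj : j = a
    · subst hj
      simp [hnd.1, flipB]
    · simp [List.mem_cons, hj, flipB, Function.update_of_ne hj]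

lemma reach {n : ℕ} (B T : Fin n → Bool) :
    applyL ((List.finRange n).filter (fun j => B j != T j)) B = T := by
  rw [applyL_nodup _ ((List.nodup_finRange n).filter _)]
  funext j
  by_cases h : B j = T j
  · rw [if_neg]
    · exact h
    · simp [List.mem_filter, h]
  · rw [if_pos]
    · cases hB : B j <;> cases hT : T j <;> simp_all
    · simp [List.mem_filter, List.mem_finRange, h]

lemma seqApp_eq_of {n : ℕ} (S : ℕ → Fin n) (l : List (Fin n)) (T : ℕ → Fin n)
    (h1 : ∀ k (h : k < l.length), S k = l.get ⟨k, h⟩)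
    (h2 : ∀ k, S (k + l.length) = T k) : S = seqApp l T := by
  funext k
  by_cases h : k < l.length
  · rw [seqApp, dif_pos h]; exact h1 k h
  · rw [seqApp, dif_neg h]
    rw [← h2 (k - l.length), Nat.sub_add_cancel (by omega)]

/-! ### metric lemmas -/

lemma ds_summable {n : ℕ} (hn : 1 ≤ n) (S T : ℕ → Fin n) :
    Summable (fun k => |((S k : ℕ) : ℝ) - ((T k : ℕ) : ℝ)| / 10 ^ (k + 1)) := by
  have hg : Summable (fun k : ℕ => ((n : ℝ) * (1/10)) * (1/10 : ℝ) ^ k) :=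
    (summable_geometric_of_lt_one (by norm_num) (by norm_num)).mul_left _
  apply Summable.of_nonneg_of_le (fun k => by positivity) ?_ hg
  intro k
  have hS : ((S k : ℕ) : ℝ) ≤ (n : ℝ) := by
    exact_mod_cast le_of_lt (S k).isLt
  have hT : ((T k : ℕ) : ℝ) ≤ (n : ℝ) := by
    exact_mod_cast le_of_lt (T k).isLt
  have hS0 : (0:ℝ) ≤ ((S k : ℕ) : ℝ) := by positivity
  have hT0 : (0:ℝ) ≤ ((T k : ℕ) : ℝ) := by positivity
  have habs : |((S k : ℕ) : ℝ) - ((T k : ℕ) : ℝ)| ≤ (n : ℝ) := by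
    rw [abs_le]; constructor <;> linarith
  calc |((S k : ℕ) : ℝ) - ((T k : ℕ) : ℝ)| / 10 ^ (k + 1)
      ≤ (n : ℝ) / 10 ^ (k+1) := by gcongr
    _ = ((n : ℝ) * (1/10)) * (1/10) ^ k := by
        rw [pow_succ, one_div, inv_pow, div_eq_mul_inv, mul_inv]
        ring

lemma ds_nonneg {n : ℕ} (S T : ℕ → Fin n) : 0 ≤ ds n S T := by
  apply mul_nonneg (by positivity)
  exact tsum_nonneg (fun k => by positivity)

lemma ds_self {n : ℕ} (S : ℕ → Fin n) : ds n S S = 0 := by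
  simp [ds]

lemma de_self {n : ℕ} (E : Fin n → Bool) : de n E E = 0 := by
  simp [de]

lemma dX_self {n : ℕ} (X : (ℕ → Fin n) × (Fin n → Bool)) : dX n X X = 0 := by
  rw [dX, ds_self, de_self, add_zero]

lemma ds_lt {n : ℕ} (hn : 2 ≤ n) (S T : ℕ → Fin n) (m : ℕ)
    (h : ∀ k < m, S k = T k) : ds n S T < (1/10 : ℝ) ^ m := by
  have hn0 : (0:ℝ) < n := by
    have h2 : 0 < n := by omega
    exact_mod_cast h2
  set f : ℕ → ℝ := fun k => |((S k : ℕ) : ℝ) - ((T k : ℕ) : ℝ)| / 10 ^ (k + 1) with hf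
  have hfs : Summable f := ds_summable (by omega) S T
  have hbound : ∀ k, f k ≤ ((n : ℝ) - 1) / 10 ^ (k + 1) := by
    intro k
    have hS : ((S k : ℕ) : ℝ) ≤ (n : ℝ) - 1 := by
      have := (S k).isLt
      have : (S k : ℕ) + 1 ≤ n := this
      have := (Nat.cast_le (α := ℝ)).mpr this
      push_cast at this
      linarith
    have hT : ((T k : ℕ) : ℝ) ≤ (n : ℝ) - 1 := by
      have := (T k).isLt
      have : (T k : ℕ) + 1 ≤ n := this
      have := (Nat.cast_le (α := ℝ)).mpr this
      push_cast at this
      linarith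
    have hS0 : (0:ℝ) ≤ ((S k : ℕ) : ℝ) := by positivity
    have hT0 : (0:ℝ) ≤ ((T k : ℕ) : ℝ) := by positivity
    have habs : |((S k : ℕ) : ℝ) - ((T k : ℕ) : ℝ)| ≤ (n : ℝ) - 1 := by
      rw [abs_le]; constructor <;> linarith
    show |((S k : ℕ) : ℝ) - ((T k : ℕ) : ℝ)| / 10 ^ (k + 1) ≤ ((n : ℝ) - 1) / 10 ^ (k + 1)
    gcongr
  have hzero : ∀ k < m, f k = 0 := by
    intro k hk
    simp [hf, h k hk]
  -- split the tsum
  have hsplit := hfs.sum_add_tsum_nat_add m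
  have hsum0 : ∑ i ∈ Finset.range m, f i = 0 :=
    Finset.sum_eq_zero (fun i hi => hzero i (Finset.mem_range.mp hi))
  have htail : ∑' k : ℕ, f k = ∑' k : ℕ, f (k + m) := by
    rw [← hsplit, hsum0, zero_add]
  have hgs : Summable (fun k : ℕ => (((n:ℝ)-1) * (1/10)^(m+1)) * (1/10:ℝ) ^ k) :=
    (summable_geometric_of_lt_one (by norm_num) (by norm_num)).mul_left _
  have htle : ∑' k : ℕ, f (k + m) ≤ ∑' k : ℕ, (((n:ℝ)-1) * (1/10)^(m+1)) * (1/10:ℝ) ^ k := by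
    have hle : ∀ k : ℕ, f (k + m) ≤ (((n:ℝ)-1) * (1/10)^(m+1)) * (1/10:ℝ) ^ k := by
      intro k
      calc f (k + m) ≤ ((n : ℝ) - 1) / 10 ^ (k + m + 1) := hbound (k + m)
        _ = (((n:ℝ)-1) * (1/10)^(m+1)) * (1/10:ℝ) ^ k := by
            rw [div_eq_mul_inv, ← one_div, ← one_div_pow]
            rw [show k + m + 1 = k + (m + 1) by ring, pow_add]
            ring
    exact Summable.tsum_le_tsum hle ((summable_nat_add_iff m).mpr hfs) hgs
  have hgeo : ∑' k : ℕ, (((n:ℝ)-1) * (1/10)^(m+1)) * (1/10:ℝ) ^ k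
      = (((n:ℝ)-1) * (1/10)^(m+1)) * (1 - 1/10 : ℝ)⁻¹ := by
    rw [tsum_mul_left, tsum_geometric_of_lt_one (by norm_num) (by norm_num)]
  have hT : ∑' k : ℕ, f k ≤ (((n:ℝ)-1) * (1/10)^(m+1)) * (1 - 1/10 : ℝ)⁻¹ := by
    rw [htail, ← hgeo]; exact htle
  have harith : (9 / (n:ℝ)) * ((((n:ℝ)-1) * (1/10)^(m+1)) * (1 - 1/10 : ℝ)⁻¹)
      = (((n:ℝ)-1)/(n:ℝ)) * (1/10:ℝ)^m := by
    rw [pow_succ]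
    field_simp
    ring
  have hfrac : (((n:ℝ)-1)/(n:ℝ)) < 1 := by
    rw [div_lt_one hn0]; linarith
  have hpowpos : (0:ℝ) < (1/10:ℝ)^m := by positivity
  calc ds n S T = (9 / (n:ℝ)) * ∑' k : ℕ, f k := rfl
    _ ≤ (9 / (n:ℝ)) * ((((n:ℝ)-1) * (1/10)^(m+1)) * (1 - 1/10 : ℝ)⁻¹) := by
        apply mul_le_mul_of_nonneg_left hT (by positivity)
    _ = (((n:ℝ)-1)/(n:ℝ)) * (1/10:ℝ)^m := harith
    _ < 1 * (1/10:ℝ)^m := by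
        apply mul_lt_mul_of_pos_right hfrac hpowpos
    _ = (1/10:ℝ)^m := one_mul _

lemma de_ge_two {n : ℕ} (E F : Fin n → Bool) (j0 j1 : Fin n) (hne : j0 ≠ j1)
    (h0 : E j0 ≠ F j0) (h1 : E j1 ≠ F j1) : (2:ℝ) ≤ de n E F := by
  have hpair : ∑ k ∈ ({j0, j1} : Finset (Fin n)), (if E k = F k then (0:ℝ) else 1) = 2 := by
    rw [Finset.sum_pair hne, if_neg h0, if_neg h1]
    norm_num
  rw [de, ← hpair]
  apply Finset.sum_le_sum_of_subset_of_nonneg (Finset.subset_univ _)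
  intro i _ _
  split <;> norm_num

lemma get_app_ofFn {n m : ℕ} (S : ℕ → Fin n) (l : List (Fin n)) (k : ℕ) (hk : k < m)
    (h : k < ((List.ofFn (fun i : Fin m => S i)) ++ l).length) :
    ((List.ofFn (fun i : Fin m => S i)) ++ l).get ⟨k, h⟩ = S k := by
  rw [List.get_eq_getElem, List.getElem_append_left (by simpa using hk)]
  simp

theorem stmt14 (n : ℕ) (hn : 2 ≤ n) :
    (∀ X Y : (ℕ → Fin n) × (Fin n → Bool), ∀ rX > (0 : ℝ), ∀ rY > (0 : ℝ),
      ∃ X' t, dX n X X' < rX ∧ dX n ((Gneg n)^[t] X') Y < rY) ∧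
    (∀ X : (ℕ → Fin n) × (Fin n → Bool), ∀ ε > (0 : ℝ),
      ∃ P p, 1 ≤ p ∧ (Gneg n)^[p] P = P ∧ dX n X P < ε) ∧
    (∃ δ > (0 : ℝ), ∀ X : (ℕ → Fin n) × (Fin n → Bool), ∀ ε > (0 : ℝ),
      ∃ X' t, dX n X X' < ε ∧ dX n ((Gneg n)^[t] X) ((Gneg n)^[t] X') > δ) := by
  refine ⟨?_, ?_, ?_⟩
  · -- transitivity
    intro X Y rX hrX rY hrY
    obtain ⟨m, hm⟩ := exists_pow_lt_of_lt_one hrX (by norm_num : (1/10:ℝ) < 1)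
    set pre : List (Fin n) := List.ofFn (fun i : Fin m => X.1 i) with hpre
    set B : Fin n → Bool := applyL pre X.2 with hB
    set blk : List (Fin n) := (List.finRange n).filter (fun j => B j != Y.2 j) with hblk
    set L : List (Fin n) := pre ++ blk with hL
    refine ⟨(seqApp L Y.1, X.2), L.length, ?_, ?_⟩
    · have hds : ds n X.1 (seqApp L Y.1) < (1/10:ℝ)^m := by
        apply ds_lt hn _ _ m
        intro k hk
        have hkL : k < L.length := by
          rw [hL, List.length_append, hpre, List.length_ofFn]; omega
        rw [seqApp, dif_pos hkL]
        exact (get_app_ofFn X.1 blk k hk hkL).symm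
      have : dX n X (seqApp L Y.1, X.2) = de n X.2 X.2 + ds n X.1 (seqApp L Y.1) := rfl
      rw [this, de_self, zero_add]
      exact lt_trans hds hm
    · rw [iter_seqApp L Y.1 X.2]
      have happ : applyL L X.2 = Y.2 := by
        rw [hL, applyL_append, ← hB, hblk]
        exact reach B Y.2
      rw [happ]
      have : ((Y.1, Y.2) : (ℕ → Fin n) × (Fin n → Bool)) = Y := rfl
      rw [this, dX_self]
      exact hrY
  · -- dense periodic points
    intro X ε hε
    obtain ⟨m₀, hm₀⟩ := exists_pow_lt_of_lt_one hε (by norm_num : (1/10:ℝ) < 1)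
    set m := m₀ + 1 with hm_def
    have hmε : (1/10:ℝ)^m < ε := by
      refine lt_trans ?_ hm₀
      exact pow_lt_pow_right_of_lt_one₀ (by norm_num) (by norm_num) (by omega)
    set pre : List (Fin n) := List.ofFn (fun i : Fin m => X.1 i) with hpre
    set B : Fin n → Bool := applyL pre X.2 with hB
    set blk : List (Fin n) := (List.finRange n).filter (fun j => B j != X.2 j) with hblk
    set Q : List (Fin n) := pre ++ blk with hQ
    have hQlen : m ≤ Q.length := by
      rw [hQ, List.length_append, hpre, List.length_ofFn]; omega
    have hp1 : 1 ≤ Q.length := by omega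
    set d0 : Fin n := ⟨0, by omega⟩ with hd0
    set perS : ℕ → Fin n := fun k => Q.getD (k % Q.length) d0 with hperS
    have hfix : perS = seqApp Q perS := by
      apply seqApp_eq_of
      · intro k h
        rw [hperS]
        simp only
        rw [Nat.mod_eq_of_lt h, List.getD_eq_getElem Q d0 h, List.get_eq_getElem]
      · intro k
        rw [hperS]
        simp only
        rw [Nat.add_mod_right]
    refine ⟨(perS, X.2), Q.length, hp1, ?_, ?_⟩
    · conv_lhs => rw [hfix]
      rw [iter_seqApp Q perS X.2]
      have happ : applyL Q X.2 = X.2 := by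
        rw [hQ, applyL_append, ← hB, hblk]
        exact reach B X.2
      rw [happ]
    · have hds : ds n X.1 perS < (1/10:ℝ)^m := by
        apply ds_lt hn _ _ m
        intro k hk
        have hkQ : k < Q.length := by omega
        rw [hperS]
        simp only
        rw [Nat.mod_eq_of_lt hkQ, List.getD_eq_getElem Q d0 hkQ]
        exact (get_app_ofFn X.1 blk k hk hkQ).symm
      have : dX n X (perS, X.2) = de n X.2 X.2 + ds n X.1 perS := rfl
      rw [this, de_self, zero_add]
      exact lt_trans hds hmε
  · -- sensitivity
    refine ⟨1, by norm_num, ?_⟩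
    intro X ε hε
    obtain ⟨m, hm⟩ := exists_pow_lt_of_lt_one hε (by norm_num : (1/10:ℝ) < 1)
    set j0 : Fin n := X.1 m with hj0
    set z0 : Fin n := ⟨0, by omega⟩ with hz0
    set z1 : Fin n := ⟨1, by omega⟩ with hz1
    set j1 : Fin n := if j0 = z0 then z1 else z0 with hj1
    have hne : j0 ≠ j1 := by
      rw [hj1]
      split
      · rename_i h; rw [h]; intro hc; exact absurd (congrArg Fin.val hc) (by simp [hz0, hz1])
      · assumption
    set S' : ℕ → Fin n := fun k => if k = m then j1 else X.1 k with hS'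
    refine ⟨(S', X.2), m + 1, ?_, ?_⟩
    · have hds : ds n X.1 S' < (1/10:ℝ)^m := by
        apply ds_lt hn _ _ m
        intro k hk
        rw [hS']
        simp only
        rw [if_neg (by omega)]
      have : dX n X (S', X.2) = de n X.2 X.2 + ds n X.1 S' := rfl
      rw [this, de_self, zero_add]
      exact lt_trans hds hm
    · set preM : List (Fin n) := List.ofFn (fun i : Fin m => X.1 i) with hpreM
      set A : Fin n → Bool := applyL preM X.2 with hA
      set tl : ℕ → Fin n := fun k => X.1 (k + (m + 1)) with htl
      have hlen0 : (preM ++ [j0]).length = m + 1 := by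
        rw [List.length_append, hpreM, List.length_ofFn]; rfl
      have hlen1 : (preM ++ [j1]).length = m + 1 := by
        rw [List.length_append, hpreM, List.length_ofFn]; rfl
      have hgetlast : ∀ (j : Fin n) (h : m < (preM ++ [j]).length),
          (preM ++ [j]).get ⟨m, h⟩ = j := by
        intro j h
        rw [List.get_eq_getElem, List.getElem_append_right (by simp [hpreM])]
        simp [hpreM]
      have hX1 : X.1 = seqApp (preM ++ [j0]) tl := by
        apply seqApp_eq_of
        · intro k h
          rw [hlen0] at h
          by_cases hk : k < m
          · rw [get_app_ofFn X.1 [j0] k hk]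
          · have hkm : k = m := by omega
            subst hkm
            rw [hgetlast j0]
        · intro k
          rw [hlen0, htl]
      have hS1 : S' = seqApp (preM ++ [j1]) tl := by
        apply seqApp_eq_of
        · intro k h
          rw [hlen1] at h
          by_cases hk : k < m
          · rw [hS']; simp only; rw [if_neg (by omega), get_app_ofFn X.1 [j1] k hk]
          · have hkm : k = m := by omega
            subst hkm
            rw [hgetlast j1]
            simp [hS']
        · intro k
          rw [hlen1, hS']
          simp only
          rw [if_neg (by omega), htl]
      have hXpair : X = (seqApp (preM ++ [j0]) tl, X.2) := by
        rw [← hX1]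
      have hiter0 : (Gneg n)^[m+1] X = (tl, applyL (preM ++ [j0]) X.2) := by
        rw [hXpair, ← hlen0, iter_seqApp]
      have hiter1 : (Gneg n)^[m+1] (S', X.2) = (tl, applyL (preM ++ [j1]) X.2) := by
        rw [hS1, ← hlen1, iter_seqApp]
      have happ0 : applyL (preM ++ [j0]) X.2 = flipB j0 A := by
        rw [applyL_append, ← hA]; rfl
      have happ1 : applyL (preM ++ [j1]) X.2 = flipB j1 A := by
        rw [applyL_append, ← hA]; rfl
      have hd0 : flipB j0 A j0 ≠ flipB j1 A j0 := by
        rw [flipB, flipB, Function.update_self, Function.update_of_ne hne]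
        simp
      have hd1 : flipB j0 A j1 ≠ flipB j1 A j1 := by
        rw [flipB, flipB, Function.update_self, Function.update_of_ne hne.symm]
        simp
      have hde : (2:ℝ) ≤ de n (flipB j0 A) (flipB j1 A) := de_ge_two _ _ j0 j1 hne hd0 hd1
      have : dX n ((Gneg n)^[m+1] X) ((Gneg n)^[m+1] (S', X.2))
          = de n (flipB j0 A) (flipB j1 A) + ds n tl tl := by
        rw [hiter0, hiter1, happ0, happ1]; rfl
      rw [this, ds_self, add_zero]
      linarith
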